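/- Let B be a faithful section of a base of B(H)^+ with dual section B̃, and let a ∈ B(H)^+. Then ‖a‖_B = sup_{b̃ ∈ B̃} Tr(a b̃) = inf_{b ∈ B} 2^{D_max(a‖b)}, where D_max(a‖b) = log inf{λ > 0 : a ≤ λb}. -/

import Mathlib

open Matrix ComplexOrder

variable {n : ℕ}

set_option maxHeartbeats 1000000

def Sb (b : Matrix (Fin n) (Fin n) ℂ) : Set (Matrix (Fin n) (Fin n) ℂ) :=
  {a | a.PosSemidef ∧ (a * b).trace = 1}

def IsSection (B : Set (Matrix (Fin n) (Fin n) ℂ)) : Prop :=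
  ∃ (L : Submodule ℝ (Matrix (Fin n) (Fin n) ℂ)) (b : Matrix (Fin n) (Fin n) ℂ),
    b.PosDef ∧ B = (L : Set (Matrix (Fin n) (Fin n) ℂ)) ∩ Sb b

def IsFaithfulSection (B : Set (Matrix (Fin n) (Fin n) ℂ)) : Prop :=
  IsSection B ∧ ∃ b ∈ B, b.PosDef

def dualSection (B : Set (Matrix (Fin n) (Fin n) ℂ)) : Set (Matrix (Fin n) (Fin n) ℂ) :=
  {c | c.PosSemidef ∧ ∀ b ∈ B, (b * c).trace = 1}

/-- The norm on `B_h(H)` whose unit ball is `O_B = {x : ∃ b ∈ B, -b ≤ x ≤ b}`. -/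
noncomputable def secNorm (B : Set (Matrix (Fin n) (Fin n) ℂ))
    (x : Matrix (Fin n) (Fin n) ℂ) : ℝ :=
  sInf {t : ℝ | 0 ≤ t ∧ ∃ b ∈ B, (t • b - x).PosSemidef ∧ (t • b + x).PosSemidef}

/-- `2^{D_max(a‖b)} = inf{λ > 0 : a ≤ λ b}`, with value `∞` if no such `λ` exists. -/
noncomputable def expDmax (a b : Matrix (Fin n) (Fin n) ℂ) : ENNReal :=
  ⨅ (r : ℝ) (_ : 0 < r) (_ : (r • b - a).PosSemidef), ENNReal.ofReal r

namespace S13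

attribute [local instance] Matrix.normedAddCommGroup Matrix.normedSpace

/-! ### Basic hermitian / PSD toolkit -/

lemma isherm_smul {r : ℝ} {x : Matrix (Fin n) (Fin n) ℂ} (hx : x.IsHermitian) :
    (r • x).IsHermitian := by
  unfold Matrix.IsHermitian
  rw [conjTranspose_smul, star_trivial, hx.eq]

lemma psd_smul {r : ℝ} (hr : 0 ≤ r) {x : Matrix (Fin n) (Fin n) ℂ} (hx : x.PosSemidef) :
    (r • x).PosSemidef := by
  refine PosSemidef.of_dotProduct_mulVec_nonneg (isherm_smul hx.1) (fun v => ?_)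
  rw [smul_mulVec, dotProduct_smul]
  have h2 : (0:ℂ) ≤ (r : ℂ) := by exact_mod_cast hr
  simpa [Complex.real_smul] using mul_nonneg h2 (hx.dotProduct_mulVec_nonneg v)

lemma conj_quad {x : Matrix (Fin n) (Fin n) ℂ} (hx : x.IsHermitian) (v : Fin n → ℂ) :
    star (star v ⬝ᵥ x *ᵥ v) = star v ⬝ᵥ x *ᵥ v := by
  conv_lhs => rw [star_dotProduct, star_star]
  rw [star_mulVec, hx.eq, ← dotProduct_mulVec]

lemma quad_im {x : Matrix (Fin n) (Fin n) ℂ} (hx : x.IsHermitian) (v : Fin n → ℂ) :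
    (star v ⬝ᵥ x *ᵥ v).im = 0 := by
  have := conj_quad hx v
  rw [← Complex.conj_eq_iff_im]
  exact this

lemma psd_iff_re {x : Matrix (Fin n) (Fin n) ℂ} (hx : x.IsHermitian) :
    x.PosSemidef ↔ ∀ v, 0 ≤ (star v ⬝ᵥ x *ᵥ v).re := by
  constructor
  · intro h v; exact h.re_dotProduct_nonneg v
  · intro h
    refine PosSemidef.of_dotProduct_mulVec_nonneg hx (fun v => ?_)
    rw [Complex.le_def]
    exact ⟨by simpa using h v, by simp [quad_im hx v]⟩

lemma posdef_iff_re {x : Matrix (Fin n) (Fin n) ℂ} (hx : x.IsHermitian) :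
    x.PosDef ↔ ∀ v ≠ 0, 0 < (star v ⬝ᵥ x *ᵥ v).re := by
  constructor
  · intro h v hv; exact h.re_dotProduct_pos hv
  · intro h
    refine PosDef.of_dotProduct_mulVec_pos hx (fun v hv => ?_)
    rw [Complex.lt_def]
    exact ⟨by simpa using (h v hv), by simp [quad_im hx v]⟩

/-! ### Spectral shift lemmas -/

lemma unitary_conj_smul_one (U : Matrix (Fin n) (Fin n) ℂ) (hU : U ∈ unitaryGroup (Fin n) ℂ)
    (r : ℝ) : U * (r • (1 : Matrix (Fin n) (Fin n) ℂ)) * star U = r • 1 := by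
  rw [Matrix.mul_smul, Matrix.mul_one, Matrix.smul_mul]
  congr 1
  exact (mem_unitaryGroup_iff.mp hU)

lemma smul_one_diag (r : ℝ) :
    (r • (1 : Matrix (Fin n) (Fin n) ℂ)) = diagonal (fun _ => (r:ℂ)) := by
  ext i j
  by_cases h : i = j
  · simp [h, Matrix.one_apply, Matrix.diagonal_apply, Complex.real_smul]
  · simp [h, Matrix.one_apply, Matrix.diagonal_apply, Complex.real_smul]

lemma herm_conj_decomp {x : Matrix (Fin n) (Fin n) ℂ} (hx : x.IsHermitian) (r : ℝ) :
    x - r • 1 = (hx.eigenvectorUnitary : Matrix (Fin n) (Fin n) ℂ) *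
      (diagonal (fun i => ((hx.eigenvalues i - r : ℝ) : ℂ))) *
      star (hx.eigenvectorUnitary : Matrix (Fin n) (Fin n) ℂ) := by
  have h2 := unitary_conj_smul_one _ (hx.eigenvectorUnitary).2 r
  have key : diagonal (fun i => ((hx.eigenvalues i - r : ℝ) : ℂ))
      = diagonal (RCLike.ofReal ∘ hx.eigenvalues) - r • 1 := by
    rw [smul_one_diag, diagonal_sub]
    congr 1
    funext i
    push_cast
    rfl
  have hs := hx.spectral_theorem
  rw [Unitary.conjStarAlgAut_apply] at hs
  rw [key, Matrix.mul_sub, Matrix.sub_mul, ← hs, h2]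

lemma herm_conj_decomp' {x : Matrix (Fin n) (Fin n) ℂ} (hx : x.IsHermitian) (r : ℝ) :
    r • 1 - x = (hx.eigenvectorUnitary : Matrix (Fin n) (Fin n) ℂ) *
      (diagonal (fun i => ((r - hx.eigenvalues i : ℝ) : ℂ))) *
      star (hx.eigenvectorUnitary : Matrix (Fin n) (Fin n) ℂ) := by
  have h := herm_conj_decomp hx r
  have h0 : r • (1 : Matrix (Fin n) (Fin n) ℂ) - x = -(x - r • 1) := (neg_sub _ _).symm
  have h1 : (fun i => ((r - hx.eigenvalues i : ℝ) : ℂ))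
      = (fun i => -((hx.eigenvalues i - r : ℝ) : ℂ)) := by
    funext i
    push_cast
    ring
  rw [h0, h, h1, ← diagonal_neg, Matrix.mul_neg, Matrix.neg_mul]

lemma sub_smul_one_psd {x : Matrix (Fin n) (Fin n) ℂ} (hx : x.IsHermitian) {r : ℝ}
    (hr : ∀ i, r ≤ hx.eigenvalues i) : (x - r • 1).PosSemidef := by
  rw [herm_conj_decomp hx r]
  refine (Matrix.PosSemidef.diagonal (fun i => ?_)).mul_mul_conjTranspose_same _
  simp only [Pi.zero_apply]
  exact_mod_cast (by linarith [hr i] : (0:ℝ) ≤ hx.eigenvalues i - r)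

lemma smul_one_sub_psd {x : Matrix (Fin n) (Fin n) ℂ} (hx : x.IsHermitian) {r : ℝ}
    (hr : ∀ i, hx.eigenvalues i ≤ r) : (r • 1 - x).PosSemidef := by
  rw [herm_conj_decomp' hx r]
  refine (Matrix.PosSemidef.diagonal (fun i => ?_)).mul_mul_conjTranspose_same _
  simp only [Pi.zero_apply]
  exact_mod_cast (by linarith [hr i] : (0:ℝ) ≤ r - hx.eigenvalues i)

lemma psd_dim_zero (h0 : n = 0) (x : Matrix (Fin n) (Fin n) ℂ) : x.PosSemidef := by
  subst h0
  refine ⟨Subsingleton.elim _ _, fun v => ?_⟩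
  rw [Subsingleton.elim v 0]
  simp

lemma posdef_eps {x : Matrix (Fin n) (Fin n) ℂ} (hx : x.PosDef) :
    ∃ ε : ℝ, 0 < ε ∧ (x - ε • 1).PosSemidef := by
  rcases Nat.eq_zero_or_pos n with h0 | hpos
  · exact ⟨1, one_pos, psd_dim_zero h0 _⟩
  · haveI : Nonempty (Fin n) := ⟨⟨0, hpos⟩⟩
    obtain ⟨i₀, -, hmin⟩ := Finset.exists_min_image Finset.univ hx.1.eigenvalues
      ⟨Classical.arbitrary (Fin n), Finset.mem_univ _⟩
    exact ⟨hx.1.eigenvalues i₀, hx.eigenvalues_pos i₀,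
      sub_smul_one_psd hx.1 (fun i => hmin i (Finset.mem_univ i))⟩

lemma herm_upper {x : Matrix (Fin n) (Fin n) ℂ} (hx : x.IsHermitian) :
    ∃ R : ℝ, (R • 1 - x).PosSemidef := by
  rcases Nat.eq_zero_or_pos n with h0 | hpos
  · exact ⟨1, psd_dim_zero h0 _⟩
  · haveI : Nonempty (Fin n) := ⟨⟨0, hpos⟩⟩
    obtain ⟨i₀, -, hmax⟩ := Finset.exists_max_image Finset.univ hx.eigenvalues
      ⟨Classical.arbitrary (Fin n), Finset.mem_univ _⟩
    exact ⟨hx.eigenvalues i₀,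
      smul_one_sub_psd hx (fun i => hmax i (Finset.mem_univ i))⟩

lemma exists_scale {a b : Matrix (Fin n) (Fin n) ℂ} (ha : a.PosSemidef) (hb : b.PosDef) :
    ∃ t : ℝ, 0 < t ∧ (t • b - a).PosSemidef := by
  obtain ⟨ε, hε, hbe⟩ := posdef_eps hb
  obtain ⟨R, hR⟩ := herm_upper ha.1
  refine ⟨max (R / ε) 1, lt_max_of_lt_right one_pos, ?_⟩
  set t := max (R / ε) 1 with ht
  have htR : R ≤ t * ε := by
    have : R / ε ≤ t := le_max_left _ _
    calc R = (R / ε) * ε := by field_simp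
    _ ≤ t * ε := by nlinarith
  have key : t • b - a = t • (b - ε • 1) + ((t * ε - R) • (1:Matrix (Fin n) (Fin n) ℂ)
      + (R • 1 - a)) := by
    module
  rw [key]
  refine psd_smul (le_of_lt (lt_of_lt_of_le one_pos (le_max_right _ _))) hbe |>.add
    ((psd_smul (by linarith) Matrix.PosSemidef.one).add hR)

/-! ### Trace lemmas -/

lemma psd_diag {M : Matrix (Fin n) (Fin n) ℂ} (hM : M.PosSemidef) (i : Fin n) :
    0 ≤ M i i := by
  have := hM.dotProduct_mulVec_nonneg (Pi.single i 1)
  simpa [dotProduct, mulVec, Pi.single_apply, Finset.sum_ite_eq] using this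

lemma psd_trace {M : Matrix (Fin n) (Fin n) ℂ} (hM : M.PosSemidef) : 0 ≤ M.trace := by
  rw [Matrix.trace]
  exact Finset.sum_nonneg (fun i _ => psd_diag hM i)

lemma trace_mul_psd_nonneg {p c : Matrix (Fin n) (Fin n) ℂ} (hp : p.PosSemidef)
    (hc : c.PosSemidef) : 0 ≤ (p * c).trace := by
  obtain ⟨m, v, rfl⟩ := Matrix.posSemidef_iff_eq_sum_vecMulVec.mp hp
  rw [Finset.sum_mul, trace_sum]
  refine Finset.sum_nonneg fun i _ => ?_
  rw [vecMulVec_eq (Fin 1), ← conjTranspose_replicateCol, Matrix.mul_assoc, trace_mul_comm]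
  exact (hc.conjTranspose_mul_mul_same _).trace_nonneg

lemma trace_mul_psd_re_nonneg {p c : Matrix (Fin n) (Fin n) ℂ} (hp : p.PosSemidef)
    (hc : c.PosSemidef) : 0 ≤ ((p * c).trace).re := by
  have := trace_mul_psd_nonneg hp hc
  rw [Complex.le_def] at this
  simpa using this.1

lemma trace_herm_mul_real {b c : Matrix (Fin n) (Fin n) ℂ} (hb : b.IsHermitian)
    (hc : c.IsHermitian) : star ((b * c).trace) = (b * c).trace := by
  rw [← trace_conjTranspose, conjTranspose_mul, hb.eq, hc.eq, trace_mul_comm]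

/-! ### Quadratic form estimates -/

noncomputable def N2 (v : Fin n → ℂ) : ℝ := ∑ p, ‖v p‖ ^ 2

lemma N2_nonneg (v : Fin n → ℂ) : 0 ≤ N2 v :=
  Finset.sum_nonneg fun _ _ => sq_nonneg _

lemma N2_pos {v : Fin n → ℂ} (hv : v ≠ 0) : 0 < N2 v := by
  obtain ⟨p, hp⟩ := Function.ne_iff.mp hv
  exact Finset.sum_pos' (fun q _ => sq_nonneg _)
    ⟨p, Finset.mem_univ p, by have := norm_pos_iff.mpr hp; positivity⟩

lemma dot_self_re (v : Fin n → ℂ) : (star v ⬝ᵥ v).re = N2 v := by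
  rw [dotProduct, Complex.re_sum, N2]
  congr 1
  funext p
  simp [Pi.star_apply, RCLike.star_def, Complex.normSq_eq_norm_sq]
  rw [Complex.sq_norm, Complex.normSq_apply]

lemma quad_smul_one_re (s : ℝ) (v : Fin n → ℂ) :
    (star v ⬝ᵥ (s • (1 : Matrix (Fin n) (Fin n) ℂ)) *ᵥ v).re = s * N2 v := by
  rw [smul_mulVec, one_mulVec, dotProduct_smul]
  rw [Complex.real_smul, Complex.re_ofReal_mul, dot_self_re]

lemma quad_lower {x : Matrix (Fin n) (Fin n) ℂ} {ε : ℝ}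
    (h : (x - ε • 1).PosSemidef) (v : Fin n → ℂ) :
    ε * N2 v ≤ (star v ⬝ᵥ x *ᵥ v).re := by
  have h0 := h.re_dotProduct_nonneg v
  rw [sub_mulVec, dotProduct_sub] at h0
  simp only [RCLike.re_to_complex, Complex.sub_re] at h0
  rw [quad_smul_one_re] at h0
  linarith

lemma quad_abs_le (z : Matrix (Fin n) (Fin n) ℂ) (v : Fin n → ℂ) :
    |(star v ⬝ᵥ z *ᵥ v).re| ≤ (n : ℝ) * ‖z‖ * N2 v := by
  have h1 : ‖star v ⬝ᵥ z *ᵥ v‖ ≤ ∑ p, ∑ q, ‖z‖ * (‖v p‖ * ‖v q‖) := by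
    rw [dotProduct]
    refine (norm_sum_le _ _).trans (Finset.sum_le_sum fun p _ => ?_)
    rw [mulVec, norm_mul, Pi.star_apply, norm_star]
    calc ‖v p‖ * ‖(fun q => z p q) ⬝ᵥ v‖
        ≤ ‖v p‖ * ∑ q, ‖z p q‖ * ‖v q‖ := by
          refine mul_le_mul_of_nonneg_left ?_ (norm_nonneg _)
          rw [dotProduct]
          exact (norm_sum_le _ _).trans (Finset.sum_le_sum fun q _ => by rw [norm_mul])
      _ ≤ ∑ q, ‖z‖ * (‖v p‖ * ‖v q‖) := by
          rw [Finset.mul_sum]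
          refine Finset.sum_le_sum fun q _ => ?_
          have := Matrix.norm_entry_le_entrywise_sup_norm (A := z) (i := p) (j := q)
          rw [show ‖v p‖ * (‖z p q‖ * ‖v q‖) = ‖z p q‖ * (‖v p‖ * ‖v q‖) by ring]
          exact mul_le_mul_of_nonneg_right this (by positivity)
  have h2 : (∑ p, ∑ q, ‖z‖ * (‖v p‖ * ‖v q‖)) = ‖z‖ * (∑ p, ‖v p‖) ^ 2 := by
    rw [sq, Finset.sum_mul_sum, Finset.mul_sum]
    congr 1
    funext p
    rw [Finset.mul_sum]
  have h3 : (∑ p, ‖v p‖) ^ 2 ≤ (n : ℝ) * N2 v := by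
    simpa [N2] using sq_sum_le_card_mul_sum_sq (s := Finset.univ)
      (f := fun p => ‖v p‖)
  calc |(star v ⬝ᵥ z *ᵥ v).re| ≤ ‖star v ⬝ᵥ z *ᵥ v‖ := Complex.abs_re_le_norm _
    _ ≤ ‖z‖ * (∑ p, ‖v p‖) ^ 2 := by rw [← h2]; exact h1
    _ ≤ ‖z‖ * ((n:ℝ) * N2 v) := mul_le_mul_of_nonneg_left h3 (norm_nonneg _)
    _ = (n : ℝ) * ‖z‖ * N2 v := by ring

end S13
namespace S13

attribute [local instance] Matrix.normedAddCommGroup Matrix.normedSpace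

/-! ### The Hermitian subspace -/

noncomputable def HM (n : ℕ) : Submodule ℝ (Matrix (Fin n) (Fin n) ℂ) where
  carrier := {x | x.IsHermitian}
  add_mem' := fun hx hy => hx.add hy
  zero_mem' := isHermitian_zero
  smul_mem' := fun r x hx => by
    show ((r • x)ᴴ = r • x)
    rw [conjTranspose_smul, star_trivial, hx.eq]

lemma mem_HM {x : Matrix (Fin n) (Fin n) ℂ} : x ∈ HM n ↔ x.IsHermitian := Iff.rfl

lemma posdef_smul_one {s : ℝ} (hs : 0 < s) : (s • (1 : Matrix (Fin n) (Fin n) ℂ)).PosDef := by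
  rw [posdef_iff_re (isherm_smul isHermitian_one)]
  intro v hv
  rw [quad_smul_one_re]
  exact mul_pos hs (N2_pos hv)

lemma posdef_smul {k : ℝ} (hk : 0 < k) {x : Matrix (Fin n) (Fin n) ℂ} (hx : x.PosDef) :
    (k • x).PosDef := by
  rw [posdef_iff_re (isherm_smul hx.1)]
  intro v hv
  rw [smul_mulVec, dotProduct_smul, Complex.real_smul, Complex.re_ofReal_mul]
  exact mul_pos hk (hx.re_dotProduct_pos hv)

lemma psd_add_posdef {p y : Matrix (Fin n) (Fin n) ℂ} (hp : p.PosSemidef) (hy : y.PosDef) :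
    (p + y).PosDef := by
  rw [add_comm]
  exact hy.add_posSemidef hp

lemma isOpen_sPD : IsOpen {x : HM n | (x : Matrix (Fin n) (Fin n) ℂ).PosDef} := by
  refine Metric.isOpen_iff (α := HM n) |>.mpr fun x hx => ?_
  obtain ⟨ε, hε, hxe⟩ := posdef_eps hx
  refine ⟨ε / (n + 1), by positivity, fun y hy => ?_⟩
  rw [Metric.mem_ball, dist_eq_norm] at hy
  have hz : ‖(y : Matrix (Fin n) (Fin n) ℂ) - x‖ < ε / (n + 1) := hy
  rw [Set.mem_setOf_eq, posdef_iff_re y.2]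
  intro v hv
  set z : Matrix (Fin n) (Fin n) ℂ := (y : Matrix (Fin n) (Fin n) ℂ) - x with hzdef
  have e1 : (star v ⬝ᵥ (y : Matrix (Fin n) (Fin n) ℂ) *ᵥ v).re
      = (star v ⬝ᵥ (x : Matrix (Fin n) (Fin n) ℂ) *ᵥ v).re + (star v ⬝ᵥ z *ᵥ v).re := by
    have : (y : Matrix (Fin n) (Fin n) ℂ) = (x : Matrix (Fin n) (Fin n) ℂ) + z := by
      rw [hzdef]; abel
    rw [this, add_mulVec, dotProduct_add, Complex.add_re]
  have h2 := quad_lower hxe v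
  have h3 := quad_abs_le z v
  have hN := N2_pos hv
  have h5 : (n : ℝ) * ‖z‖ * N2 v < ε * N2 v := by
    have hnn : (0:ℝ) ≤ (n:ℝ) := Nat.cast_nonneg n
    have h6 : (n : ℝ) * ‖z‖ ≤ (n : ℝ) * (ε / (n+1)) :=
      mul_le_mul_of_nonneg_left (le_of_lt hz) hnn
    have h7 : (n : ℝ) * (ε / (n+1)) < ε := by
      rw [div_eq_inv_mul, ← mul_assoc]
      have : (n : ℝ) * ((n:ℝ)+1)⁻¹ < 1 := by
        rw [mul_inv_lt_iff₀ (by positivity), one_mul]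
        linarith
      nlinarith
    have : (n : ℝ) * ‖z‖ < ε := lt_of_le_of_lt h6 h7
    nlinarith
  have h8 : -((n : ℝ) * ‖z‖ * N2 v) ≤ (star v ⬝ᵥ z *ᵥ v).re := by
    have := neg_abs_le ((star v ⬝ᵥ z *ᵥ v).re)
    linarith [h3]
  rw [e1]
  nlinarith

lemma convex_sPD : Convex ℝ {x : HM n | (x : Matrix (Fin n) (Fin n) ℂ).PosDef} := by
  intro x hx y hy u v hu hv huv
  rw [Set.mem_setOf_eq]
  have hherm : ((u • x + v • y : HM n) : Matrix (Fin n) (Fin n) ℂ).IsHermitian :=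
    (u • x + v • y : HM n).2
  rw [posdef_iff_re hherm]
  intro w hw
  have e : ((u • x + v • y : HM n) : Matrix (Fin n) (Fin n) ℂ)
      = u • (x : Matrix (Fin n) (Fin n) ℂ) + v • (y : Matrix (Fin n) (Fin n) ℂ) := by
    push_cast
    rfl
  rw [e, add_mulVec, dotProduct_add, Complex.add_re, smul_mulVec, smul_mulVec,
    dotProduct_smul, dotProduct_smul, Complex.real_smul, Complex.real_smul,
    Complex.re_ofReal_mul, Complex.re_ofReal_mul]
  have hx' := hx.re_dotProduct_pos hw
  have hy' := hy.re_dotProduct_pos hw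
  simp only [RCLike.re_to_complex] at hx' hy'
  rcases eq_or_lt_of_le hu with hu' | hu'
  · have hv1 : v = 1 := by linarith
    rw [← hu', hv1]
    simpa using hy'
  · nlinarith

end S13
namespace S13

attribute [local instance] Matrix.normedAddCommGroup Matrix.normedSpace

/-! ### Hermitian part projection and representing matrices -/

noncomputable def hermPart (n : ℕ) : Matrix (Fin n) (Fin n) ℂ →ₗ[ℝ] HM n where
  toFun x := ⟨(2⁻¹ : ℝ) • (x + xᴴ), by
    show (((2⁻¹ : ℝ) • (x + xᴴ))ᴴ = (2⁻¹ : ℝ) • (x + xᴴ))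
    rw [conjTranspose_smul, star_trivial, conjTranspose_add, conjTranspose_conjTranspose,
      add_comm]⟩
  map_add' x y := by
    apply Subtype.ext
    show (2⁻¹ : ℝ) • (x + y + (x + y)ᴴ) = (2⁻¹ : ℝ) • (x + xᴴ) + (2⁻¹ : ℝ) • (y + yᴴ)
    rw [conjTranspose_add]
    module
  map_smul' r x := by
    apply Subtype.ext
    show (2⁻¹ : ℝ) • (r • x + (r • x)ᴴ) = r • ((2⁻¹ : ℝ) • (x + xᴴ))
    rw [conjTranspose_smul, star_trivial]
    module

lemma hermPart_of_herm {x : Matrix (Fin n) (Fin n) ℂ} (hx : x.IsHermitian) :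
    hermPart n x = ⟨x, hx⟩ := by
  apply Subtype.ext
  show (2⁻¹ : ℝ) • (x + xᴴ) = x
  rw [hx.eq]
  module

lemma hermPart_conjT (x : Matrix (Fin n) (Fin n) ℂ) : hermPart n xᴴ = hermPart n x := by
  apply Subtype.ext
  show (2⁻¹ : ℝ) • (xᴴ + xᴴᴴ) = (2⁻¹ : ℝ) • (x + xᴴ)
  rw [conjTranspose_conjTranspose, add_comm]

/-- The matrix representing a real-linear functional `G` via `x ↦ re (tr (x * rep G))`. -/
noncomputable def rep (G : Matrix (Fin n) (Fin n) ℂ →ₗ[ℝ] ℝ) : Matrix (Fin n) (Fin n) ℂ :=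
  Matrix.of fun q p =>
    ((G (single p q 1) : ℝ) : ℂ)
      - Complex.I * ((G (Complex.I • single p q 1) : ℝ) : ℂ)

lemma stdBasis_decomp (p q : Fin n) (z : ℂ) :
    single p q z
      = z.re • single p q (1:ℂ) + z.im • (Complex.I • single p q (1:ℂ)) := by
  ext i j
  simp only [Matrix.single, Matrix.of_apply, Matrix.add_apply, Pi.smul_apply,
    Matrix.smul_apply, Complex.real_smul, smul_eq_mul]
  split_ifs with h
  · rw [mul_one, mul_one]
    exact (Complex.re_add_im z).symm
  · simp

lemma rep_trace (G : Matrix (Fin n) (Fin n) ℂ →ₗ[ℝ] ℝ) (x : Matrix (Fin n) (Fin n) ℂ) :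
    ((x * rep G).trace).re = G x := by
  have htr : (x * rep G).trace = ∑ p, ∑ q, x p q * rep G q p := by
    rw [Matrix.trace]
    refine Finset.sum_congr rfl fun p _ => ?_
    rw [Matrix.diag_apply, Matrix.mul_apply]
  rw [htr, Complex.re_sum]
  have hterm : ∀ p q, (x p q * rep G q p).re
      = (x p q).re * G (single p q 1)
        + (x p q).im * G (Complex.I • single p q 1) := by
    intro p q
    rw [rep]
    simp only [Matrix.of_apply]
    set s := G (single p q 1)
    set t := G (Complex.I • single p q 1)
    simp [Complex.mul_re, Complex.sub_re, Complex.sub_im, Complex.mul_im,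
      Complex.I_re, Complex.I_im, Complex.ofReal_re, Complex.ofReal_im]
    try ring
  conv_rhs => rw [matrix_eq_sum_single x]
  rw [map_sum]
  refine Finset.sum_congr rfl fun p _ => ?_
  rw [Complex.re_sum, map_sum]
  refine Finset.sum_congr rfl fun q _ => ?_
  rw [hterm p q, stdBasis_decomp p q (x p q), map_add, LinearMap.map_smul,
    LinearMap.map_smul, smul_eq_mul, smul_eq_mul]

lemma stdE_conjT (p q : Fin n) :
    (single p q (1:ℂ))ᴴ = single q p (1:ℂ) := by
  ext i j
  simp only [conjTranspose_apply, Matrix.single, Matrix.of_apply]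
  split_ifs with h1 h2 h2
  · simp
  · exact absurd ⟨h1.2, h1.1⟩ h2
  · exact absurd ⟨h2.2, h2.1⟩ h1
  · simp

lemma stdEI_conjT (p q : Fin n) :
    (Complex.I • single p q (1:ℂ))ᴴ = -(Complex.I • single q p (1:ℂ)) := by
  rw [conjTranspose_smul, stdE_conjT, Complex.star_def, Complex.conj_I, neg_smul]

lemma rep_herm (G : Matrix (Fin n) (Fin n) ℂ →ₗ[ℝ] ℝ)
    (hG : ∀ x, G xᴴ = G x) : (rep G).IsHermitian := by
  have hE : ∀ p q : Fin n, G (single q p 1) = G (single p q 1) := by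
    intro p q
    rw [← stdE_conjT p q, hG]
  have hEI : ∀ p q : Fin n,
      G (Complex.I • single q p 1) = -G (Complex.I • single p q 1) := by
    intro p q
    rw [← hG (Complex.I • single q p 1), stdEI_conjT, map_neg]
  unfold Matrix.IsHermitian
  ext q p
  rw [conjTranspose_apply, rep]
  simp only [Matrix.of_apply]
  rw [star_sub, star_mul']
  rw [hE q p, hEI q p]
  apply Complex.ext <;>
    simp [Complex.sub_re, Complex.sub_im, Complex.mul_re, Complex.mul_im] <;> ring

lemma outer_psd (v : Fin n → ℂ) : (vecMulVec v (star v)).PosSemidef := by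
  rw [vecMulVec_eq (Fin 1), ← conjTranspose_replicateCol]
  exact posSemidef_self_mul_conjTranspose _

lemma trace_outer (v : Fin n → ℂ) (c : Matrix (Fin n) (Fin n) ℂ) :
    (vecMulVec v (star v) * c).trace = star v ⬝ᵥ c *ᵥ v := by
  rw [Matrix.trace, dotProduct]
  simp only [Matrix.diag_apply, Matrix.mul_apply, Matrix.vecMulVec_apply, mulVec, dotProduct,
    Pi.star_apply]
  rw [Finset.sum_comm]
  refine Finset.sum_congr rfl fun i _ => ?_
  rw [Finset.mul_sum]
  refine Finset.sum_congr rfl fun q _ => ?_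
  ring

lemma rep_psd (G : Matrix (Fin n) (Fin n) ℂ →ₗ[ℝ] ℝ) (hG : ∀ x, G xᴴ = G x)
    (hpos : ∀ p : Matrix (Fin n) (Fin n) ℂ, p.PosSemidef → 0 ≤ G p) :
    (rep G).PosSemidef := by
  rw [psd_iff_re (rep_herm G hG)]
  intro v
  rw [← trace_outer v (rep G), rep_trace]
  exact hpos _ (outer_psd v)

end S13
namespace S13

set_option maxHeartbeats 1000000

attribute [local instance] Matrix.normedAddCommGroup Matrix.normedSpace

lemma exists_dual_elt {n : ℕ} (L : Submodule ℝ (Matrix (Fin n) (Fin n) ℂ))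
    {b₀ : Matrix (Fin n) (Fin n) ℂ} (hb₀ : b₀.PosDef)
    {b₁ : Matrix (Fin n) (Fin n) ℂ}
    (hb₁B : b₁ ∈ (↑L ∩ Sb b₀ : Set (Matrix (Fin n) (Fin n) ℂ))) (hb₁ : b₁.PosDef)
    {a : Matrix (Fin n) (Fin n) ℂ} (ha : a.PosSemidef) {t' : ℝ} (ht'pos : 0 < t')
    (hsep : ∀ b ∈ (↑L ∩ Sb b₀ : Set (Matrix (Fin n) (Fin n) ℂ)), ¬ (t' • b - a).PosSemidef) :
    ∃ c ∈ dualSection (↑L ∩ Sb b₀ : Set (Matrix (Fin n) (Fin n) ℂ)),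
      t' ≤ ((a * c).trace).re := by
  set B : Set (Matrix (Fin n) (Fin n) ℂ) := ↑L ∩ Sb b₀ with hBdef
  have hBmem : ∀ {b}, b ∈ B → b ∈ L ∧ b.PosSemidef ∧ (b * b₀).trace = 1 :=
    fun {b} hb => ⟨hb.1, hb.2.1, hb.2.2⟩
  have hBmem' : ∀ {b}, b ∈ L → b.PosSemidef → (b * b₀).trace = 1 → b ∈ B :=
    fun {b} h1 h2 h3 => ⟨h1, h2, h3⟩
  set W : Set (Matrix (Fin n) (Fin n) ℂ) :=
    {w | w ∈ L ∧ w.IsHermitian ∧ (w * b₀).trace = 0} with hWdef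
  set sPD : Set (HM n) := {x : HM n | (x : Matrix (Fin n) (Fin n) ℂ).PosDef} with hsPD
  set sM : Set (HM n) :=
    {y : HM n | ∃ b ∈ B, ∃ w ∈ W, (y : Matrix (Fin n) (Fin n) ℂ) = t' • b - a + w} with hsM
  -- convexity of sM
  have hconvM : Convex ℝ sM := by
    rintro y₁ ⟨c₁, hc₁, w₁, hw₁, e₁⟩ y₂ ⟨c₂, hc₂, w₂, hw₂, e₂⟩ u v hu hv huv
    refine ⟨u • c₁ + v • c₂, ?_, u • w₁ + v • w₂, ?_, ?_⟩
    · refine hBmem' (L.add_mem (L.smul_mem u (hBmem hc₁).1) (L.smul_mem v (hBmem hc₂).1))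
        ((psd_smul hu (hBmem hc₁).2.1).add (psd_smul hv (hBmem hc₂).2.1)) ?_
      rw [Matrix.add_mul, Matrix.smul_mul, Matrix.smul_mul, trace_add, trace_smul, trace_smul,
        (hBmem hc₁).2.2, (hBmem hc₂).2.2]
      simp only [Complex.real_smul, mul_one]
      exact_mod_cast congrArg (fun r : ℝ => (r : ℂ)) huv
    · exact ⟨L.add_mem (L.smul_mem u hw₁.1) (L.smul_mem v hw₂.1),
        (isherm_smul hw₁.2.1).add (isherm_smul hw₂.2.1), by
          rw [Matrix.add_mul, Matrix.smul_mul, Matrix.smul_mul, trace_add, trace_smul,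
            trace_smul, hw₁.2.2, hw₂.2.2]
          simp⟩
    · have ecoe : ((u • y₁ + v • y₂ : HM n) : Matrix (Fin n) (Fin n) ℂ)
          = u • (y₁ : Matrix (Fin n) (Fin n) ℂ) + v • (y₂ : Matrix (Fin n) (Fin n) ℂ) := by
        push_cast; rfl
      show ((u • y₁ + v • y₂ : HM n) : Matrix (Fin n) (Fin n) ℂ) = _
      rw [ecoe, e₁, e₂]
      rw [show (t' • (u • c₁ + v • c₂) - a + (u • w₁ + v • w₂) : Matrix (Fin n) (Fin n) ℂ)
          = t' • (u • c₁ + v • c₂) - (u + v) • a + (u • w₁ + v • w₂) by rw [huv, one_smul]]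
      module
  -- disjointness
  have hdisj : Disjoint sPD sM := by
    rw [Set.disjoint_left]
    rintro x hx ⟨b, hbB, w, hwW, hxe⟩
    set b' : Matrix (Fin n) (Fin n) ℂ := b + t'⁻¹ • w with hb'
    have hsmul : t' • b' - a = (x : Matrix (Fin n) (Fin n) ℂ) := by
      rw [hb', hxe, smul_add, smul_smul, mul_inv_cancel₀ (ne_of_gt ht'pos), one_smul]
      abel
    have hb'psd : b'.PosSemidef := by
      have h1 : (t' • b' : Matrix (Fin n) (Fin n) ℂ).PosSemidef := by
        have he : t' • b' = (x : Matrix (Fin n) (Fin n) ℂ) + a := by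
          rw [← hsmul]; abel
        rw [he]
        exact hx.posSemidef.add ha
      have he2 : b' = t'⁻¹ • (t' • b') := by
        rw [smul_smul, inv_mul_cancel₀ (ne_of_gt ht'pos), one_smul]
      rw [he2]
      exact psd_smul (le_of_lt (inv_pos.mpr ht'pos)) h1
    have hb'B : b' ∈ B := by
      refine hBmem' (L.add_mem (hBmem hbB).1 (L.smul_mem _ hwW.1)) hb'psd ?_
      rw [hb', Matrix.add_mul, Matrix.smul_mul, trace_add, trace_smul, (hBmem hbB).2.2,
        hwW.2.2]
      simp
    exact hsep b' hb'B (hsmul ▸ hx.posSemidef)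
  -- separation
  obtain ⟨f, u, hfPD, hfM⟩ := geometric_hahn_banach_open convex_sPD isOpen_sPD hconvM hdisj
  -- the linear functional G = -f ∘ hermPart
  set G : Matrix (Fin n) (Fin n) ℂ →ₗ[ℝ] ℝ :=
    -((f : HM n →ₗ[ℝ] ℝ).comp (hermPart n)) with hGdef
  have hGval : ∀ (x : Matrix (Fin n) (Fin n) ℂ) (hx : x.IsHermitian),
      G x = -f ⟨x, hx⟩ := by
    intro x hx
    rw [hGdef]
    simp [hermPart_of_herm hx]
  have hGconj : ∀ x, G xᴴ = G x := by
    intro x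
    rw [hGdef]
    simp [hermPart_conjT]
  -- f is < u on positive definites
  have hPDf : ∀ (p : Matrix (Fin n) (Fin n) ℂ) (hp : p.PosDef), f ⟨p, hp.1⟩ < u := by
    intro p hp
    exact hfPD ⟨p, hp.1⟩ hp
  set one' : HM n := ⟨(1 : Matrix (Fin n) (Fin n) ℂ), Matrix.isHermitian_one⟩ with hone'
  have hsone : ∀ s : ℝ, 0 < s → s * f one' < u := by
    intro s hs
    have h1 : ((s • one' : HM n) : Matrix (Fin n) (Fin n) ℂ).PosDef := posdef_smul_one hs
    have := hfPD (s • one') h1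
    rwa [f.map_smul, smul_eq_mul] at this
  have hu0 : 0 ≤ u := by
    by_contra hu
    push_neg at hu
    set A := f one' with hA
    set s : ℝ := -u / (|A| + 1) with hs
    have hspos : 0 < s := by
      rw [hs]
      have : 0 < |A| + 1 := by positivity
      have : 0 < -u := by linarith
      positivity
    have hseq : s * (|A| + 1) = -u := by
      rw [hs]; field_simp
    have hlt := hsone s hspos
    have hkey : 0 ≤ s * (A + |A|) :=
      mul_nonneg hspos.le (by linarith [neg_abs_le A])
    nlinarith [hkey]
  -- f ≤ 0 on PSD
  have hPSDf : ∀ (p : Matrix (Fin n) (Fin n) ℂ) (hp : p.PosSemidef), f ⟨p, hp.1⟩ ≤ 0 := by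
    intro p hp
    set P : HM n := ⟨p, hp.1⟩ with hP
    have step1 : ∀ s : ℝ, 0 < s → f P + s * f one' ≤ 0 := by
      intro s hs
      by_contra hpos
      push_neg at hpos
      set k : ℝ := (u + 1) / (f P + s * f one') with hk
      have hkpos : 0 < k := by
        rw [hk]
        have : (0:ℝ) < u + 1 := by linarith
        positivity
      have hmem : ((k • (P + s • one') : HM n) : Matrix (Fin n) (Fin n) ℂ).PosDef := by
        have hcoe : ((k • (P + s • one') : HM n) : Matrix (Fin n) (Fin n) ℂ)
            = k • (p + s • 1) := by push_cast; rfl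
        rw [hcoe]
        exact posdef_smul hkpos (psd_add_posdef hp (posdef_smul_one hs))
      have hlt := hfPD _ hmem
      have hfval : f (k • (P + s • one')) = k * (f P + s * f one') := by
        rw [f.map_smul, map_add, f.map_smul, smul_eq_mul, smul_eq_mul]
      rw [hfval] at hlt
      have : k * (f P + s * f one') = u + 1 := by
        rw [hk]; field_simp
      linarith
    by_contra hfp
    push_neg at hfp
    set A := f one' with hA
    set s : ℝ := f P / (|A| + 1) with hs
    have hspos : 0 < s := by
      rw [hs]
      have : 0 < |A| + 1 := by positivity
      positivity
    have h1 := step1 s hspos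
    have hseq : s * (|A| + 1) = f P := by rw [hs]; field_simp
    have hkey : 0 ≤ s * (A + |A|) :=
      mul_nonneg hspos.le (by linarith [neg_abs_le A])
    nlinarith [hkey]
  -- membership of 0 in W
  have h0W : (0 : Matrix (Fin n) (Fin n) ℂ) ∈ W := by
    refine ⟨L.zero_mem, isHermitian_zero, by simp⟩
  -- the inequality on sM
  have hMge : ∀ b ∈ B, ∀ w ∈ W, ∀ (hb : b.IsHermitian) (hw : w.IsHermitian),
      u ≤ t' * f ⟨b, hb⟩ - f ⟨a, ha.1⟩ + f ⟨w, hw⟩ := by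
    intro b hbB w hwW hb hw
    have hherm : (t' • b - a + w).IsHermitian :=
      ((isherm_smul hb).sub ha.1).add hw
    have helt : (⟨t' • b - a + w, hherm⟩ : HM n)
        = t' • (⟨b, hb⟩ : HM n) - (⟨a, ha.1⟩ : HM n) + (⟨w, hw⟩ : HM n) := by
      apply Subtype.ext
      push_cast
      rfl
    have hmem : (⟨t' • b - a + w, hherm⟩ : HM n) ∈ sM := ⟨b, hbB, w, hwW, rfl⟩
    have := hfM _ hmem
    rwa [helt, map_add, map_sub, f.map_smul, smul_eq_mul] at this
  -- f vanishes on W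
  have hW0 : ∀ w ∈ W, ∀ (hw : w.IsHermitian), f ⟨w, hw⟩ = 0 := by
    intro w hwW hw
    by_contra hne
    have hb1herm := (hBmem hb₁B).2.1.1
    set D : ℝ := t' * f ⟨b₁, hb1herm⟩ - f ⟨a, ha.1⟩ with hD
    set s : ℝ := (u - 1 - D) / f ⟨w, hw⟩ with hs
    have hsW : s • w ∈ W := by
      refine ⟨L.smul_mem _ hwW.1, isherm_smul hwW.2.1, ?_⟩
      rw [Matrix.smul_mul, trace_smul, hwW.2.2, smul_zero]
    have h1 := hMge b₁ hb₁B (s • w) hsW hb1herm (isherm_smul hw)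
    have helt2 : (⟨s • w, isherm_smul hw⟩ : HM n) = s • (⟨w, hw⟩ : HM n) := by
      apply Subtype.ext; rfl
    rw [helt2, f.map_smul, smul_eq_mul] at h1
    have hval : s * f ⟨w, hw⟩ = u - 1 - D := by
      rw [hs]; field_simp
    rw [← hD] at h1
    linarith
  -- positivity facts about G
  have hGpsd : ∀ p : Matrix (Fin n) (Fin n) ℂ, p.PosSemidef → 0 ≤ G p := by
    intro p hp
    rw [hGval p hp.1]
    have := hPSDf p hp
    linarith
  have hb1herm := (hBmem hb₁B).2.1.1
  have hb1pos : 0 < G b₁ := by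
    rcases lt_or_eq_of_le (hGpsd b₁ hb₁.posSemidef) with h | h
    · exact h
    exfalso
    have hGzero : ∀ p : Matrix (Fin n) (Fin n) ℂ, p.PosSemidef → G p = 0 := by
      intro p hp
      obtain ⟨t, ht, htp⟩ := exists_scale hp hb₁
      have h2 := hGpsd _ htp
      rw [map_sub, G.map_smul, smul_eq_mul] at h2
      have h3 := hGpsd p hp
      rw [← h] at h2
      simp at h2
      linarith
    have hGb1 : G b₁ = 0 := h.symm
    have hGa : G a = 0 := hGzero a ha
    have h4 := hMge b₁ hb₁B 0 h0W hb1herm isHermitian_zero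
    have hf0 : f ⟨(0 : Matrix (Fin n) (Fin n) ℂ), isHermitian_zero⟩ = 0 := by
      have : (⟨(0 : Matrix (Fin n) (Fin n) ℂ), isHermitian_zero⟩ : HM n) = 0 := by
        apply Subtype.ext; rfl
      rw [this, map_zero]
    have hfb1 : f ⟨b₁, hb1herm⟩ = 0 := by
      have := hGval b₁ hb1herm
      rw [hGb1] at this
      linarith
    have hfa : f ⟨a, ha.1⟩ = 0 := by
      have := hGval a ha.1
      rw [hGa] at this
      linarith
    rw [hf0, hfb1, hfa] at h4
    simp at h4
    have h5 := hPDf b₁ hb₁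
    rw [hfb1] at h5
    linarith
  set γ : ℝ := G b₁ with hγ
  -- G is constant equal to γ on B
  have hBconst : ∀ b ∈ B, ∀ (hb : b.IsHermitian), G b = γ := by
    intro b hbB hb
    have hwmem : b - b₁ ∈ W := by
      refine ⟨L.sub_mem (hBmem hbB).1 (hBmem hb₁B).1, hb.sub hb1herm, ?_⟩
      rw [Matrix.sub_mul, trace_sub, (hBmem hbB).2.2, (hBmem hb₁B).2.2, sub_self]
    have h0 := hW0 _ hwmem (hb.sub hb1herm)
    have : G (b - b₁) = 0 := by
      rw [hGval _ (hb.sub hb1herm), h0, neg_zero]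
    rw [map_sub] at this
    rw [hγ]
    linarith
  -- main inequality : t' * γ ≤ G a
  have hGa : t' * γ ≤ G a := by
    have h4 := hMge b₁ hb₁B 0 h0W hb1herm isHermitian_zero
    have hf0 : f ⟨(0 : Matrix (Fin n) (Fin n) ℂ), isHermitian_zero⟩ = 0 := by
      have : (⟨(0 : Matrix (Fin n) (Fin n) ℂ), isHermitian_zero⟩ : HM n) = 0 := by
        apply Subtype.ext; rfl
      rw [this, map_zero]
    rw [hf0] at h4
    have e1 := hGval b₁ hb1herm
    have e2 := hGval a ha.1
    have := hu0
    rw [hγ]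
    rw [e1, e2] at *
    nlinarith [hu0, h4]
  -- representing matrix
  set c : Matrix (Fin n) (Fin n) ℂ := rep G with hc
  have hcherm : c.IsHermitian := rep_herm G hGconj
  have hcpsd : c.PosSemidef := rep_psd G hGconj hGpsd
  have htrc : ∀ x, ((x * c).trace).re = G x := rep_trace G
  have hγpos : 0 < γ := hb1pos
  refine ⟨γ⁻¹ • c, ⟨psd_smul (le_of_lt (inv_pos.mpr hγpos)) hcpsd, ?_⟩, ?_⟩
  · intro b hbB
    have hbherm := (hBmem hbB).2.1.1
    have htrval : (b * c).trace = (γ : ℂ) := by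
      have hreal := trace_herm_mul_real hbherm hcherm
      rw [Complex.star_def, Complex.conj_eq_iff_re] at hreal
      rw [← hreal, htrc b, hBconst b hbB hbherm]
    rw [Matrix.mul_smul, trace_smul, htrval, Complex.real_smul]
    rw [← Complex.ofReal_mul, inv_mul_cancel₀ (ne_of_gt hγpos), Complex.ofReal_one]
  · rw [Matrix.mul_smul, trace_smul, Complex.real_smul, Complex.re_ofReal_mul, htrc a]
    calc t' = γ⁻¹ * (t' * γ) := by field_simp
    _ ≤ γ⁻¹ * G a := by
        exact mul_le_mul_of_nonneg_left hGa (le_of_lt (inv_pos.mpr hγpos))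

end S13
/-- For positive `a`, `‖a‖_B = sup_{b̃ ∈ B̃} Tr(a b̃) = inf_{b ∈ B} 2^{D_max(a‖b)}`. -/
theorem stmt13 (B : Set (Matrix (Fin n) (Fin n) ℂ)) (hB : IsFaithfulSection B)
    (a : Matrix (Fin n) (Fin n) ℂ) (ha : a.PosSemidef) :
    secNorm B a = sSup {r | ∃ c ∈ dualSection B, r = ((a * c).trace).re} ∧
    ENNReal.ofReal (secNorm B a) = ⨅ b ∈ B, expDmax a b := by
  obtain ⟨⟨L, b₀, hb₀, hBeq⟩, b₁, hb₁B, hb₁⟩ := hB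
  subst hBeq
  set B' : Set (Matrix (Fin n) (Fin n) ℂ) := ↑L ∩ Sb b₀ with hB'
  set T : Set ℝ := {t : ℝ | 0 ≤ t ∧ ∃ b ∈ B', (t • b - a).PosSemidef ∧ (t • b + a).PosSemidef}
    with hT
  have hsec : secNorm B' a = sInf T := rfl
  set S : Set ℝ := {r | ∃ c ∈ dualSection B', r = ((a * c).trace).re} with hS
  -- basic facts
  have hTne : T.Nonempty := by
    obtain ⟨t, ht, htp⟩ := S13.exists_scale ha hb₁
    refine ⟨t, ht.le, b₁, hb₁B, htp, ?_⟩
    have he : t • b₁ + a = (t • b₁ - a) + (a + a) := by abel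
    rw [he]
    exact htp.add (ha.add ha)
  have hTbdd : BddBelow T := ⟨0, fun t ht => ht.1⟩
  have hInf0 : (0:ℝ) ≤ sInf T := le_csInf hTne (fun t ht => ht.1)
  have hb₀dual : b₀ ∈ dualSection B' := ⟨hb₀.posSemidef, fun b hb => hb.2.2⟩
  have hSne : S.Nonempty := ⟨((a * b₀).trace).re, b₀, hb₀dual, rfl⟩
  have hST : ∀ r ∈ S, ∀ t ∈ T, r ≤ t := by
    rintro r ⟨c, hc, rfl⟩ t ⟨ht0, b, hbB, h1, h2⟩
    have h3 : 0 ≤ (((t • b - a) * c).trace).re := S13.trace_mul_psd_re_nonneg h1 hc.1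
    have h4 : ((t • b - a) * c).trace = t • (b * c).trace - (a * c).trace := by
      rw [Matrix.sub_mul, Matrix.smul_mul, trace_sub, trace_smul]
    rw [h4, hc.2 b hbB] at h3
    rw [Complex.sub_re, Complex.real_smul, mul_one, Complex.ofReal_re] at h3
    linarith
  obtain ⟨t₀, ht₀⟩ := Set.Nonempty.mono (le_refl T) hTne
  have hSbdd : BddAbove S := ⟨t₀, fun r hr => hST r hr t₀ ht₀⟩
  have hsup_le : sSup S ≤ sInf T :=
    csSup_le hSne (fun r hr => le_csInf hTne (fun t ht => hST r hr t ht))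
  have hle_sup : sInf T ≤ sSup S := by
    rcases le_or_gt (sInf T) 0 with h0 | h0
    · have h1 : 0 ≤ ((a * b₀).trace).re := S13.trace_mul_psd_re_nonneg ha hb₀.posSemidef
      have h2 : ((a * b₀).trace).re ∈ S := ⟨b₀, hb₀dual, rfl⟩
      exact h0.trans (h1.trans (le_csSup hSbdd h2))
    · refine le_of_forall_lt fun z hz => ?_
      set t' := max ((z + sInf T)/2) (sInf T / 2) with ht'
      have ht'pos : 0 < t' := lt_of_lt_of_le (by linarith) (le_max_right _ _)
      have ht'lt : t' < sInf T := max_lt (by linarith) (by linarith)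
      have hzt' : z < t' := lt_of_lt_of_le (by linarith) (le_max_left _ _)
      have hsep : ∀ b ∈ B', ¬ (t' • b - a).PosSemidef := by
        intro b hb hpsd
        have hmem : t' ∈ T := ⟨ht'pos.le, b, hb, hpsd, by
          have he : t' • b + a = (t' • b - a) + (a + a) := by abel
          rw [he]
          exact hpsd.add (ha.add ha)⟩
        exact absurd (csInf_le hTbdd hmem) (not_le.mpr ht'lt)
      obtain ⟨c, hcdual, hcge⟩ := S13.exists_dual_elt L hb₀ hb₁B hb₁ ha ht'pos hsep
      have hmemS : ((a * c).trace).re ∈ S := ⟨c, hcdual, rfl⟩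
      exact lt_of_lt_of_le (lt_of_lt_of_le hzt' hcge) (le_csSup hSbdd hmemS)
  have hexp_le : ∀ (b : Matrix (Fin n) (Fin n) ℂ) (r : ℝ), 0 < r →
      ((r • b - a).PosSemidef) → expDmax a b ≤ ENNReal.ofReal r := by
    intro b r h1 h2
    unfold expDmax
    exact iInf_le_of_le r (iInf_le_of_le h1 (iInf_le_of_le h2 le_rfl))
  constructor
  · rw [hsec]
    exact le_antisymm hle_sup hsup_le
  · rw [hsec]
    apply le_antisymm
    · refine le_iInf₂ fun b hb => ?_
      unfold expDmax
      refine le_iInf fun r => le_iInf fun hr => le_iInf fun hpsd => ?_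
      refine ENNReal.ofReal_le_ofReal ?_
      refine csInf_le hTbdd ⟨hr.le, b, hb, hpsd, ?_⟩
      have he : r • b + a = (r • b - a) + (a + a) := by abel
      rw [he]
      exact hpsd.add (ha.add ha)
    · refine ENNReal.le_of_forall_pos_le_add fun η hη _ => ?_
      have hηR : (0:ℝ) < (η:ℝ) := hη
      obtain ⟨t, htT, htlt⟩ := Real.lt_sInf_add_pos hTne hηR
      obtain ⟨ht0, b, hbB, h1, h2⟩ := htT
      have hofη : ENNReal.ofReal ((η:ℝ)) = (η : ENNReal) := ENNReal.ofReal_coe_nnreal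
      rcases eq_or_lt_of_le ht0 with ht0' | ht0'
      · have hna : (-a).PosSemidef := by
          rw [← ht0', zero_smul, zero_sub] at h1
          exact h1
        have hbpsd : b.PosSemidef := hbB.2.1
        have hpsdη : ((η:ℝ) • b - a).PosSemidef := by
          have he : (η:ℝ) • b - a = (η:ℝ) • b + (-a) := by abel
          rw [he]
          exact (S13.psd_smul hηR.le hbpsd).add hna
        calc (⨅ b ∈ B', expDmax a b) ≤ expDmax a b := biInf_le _ hbB
          _ ≤ ENNReal.ofReal ((η:ℝ)) := hexp_le b _ hηR hpsdη
          _ = (η : ENNReal) := hofη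
          _ ≤ ENNReal.ofReal (sInf T) + η := le_add_self
      · calc (⨅ b ∈ B', expDmax a b) ≤ expDmax a b := biInf_le _ hbB
          _ ≤ ENNReal.ofReal t := hexp_le b t ht0' h1
          _ ≤ ENNReal.ofReal (sInf T) + η := by
              refine le_trans (ENNReal.ofReal_le_ofReal htlt.le) ?_
              rw [ENNReal.ofReal_add hInf0 hηR.le, hofη]
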